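/- Let T be a tree on n vertices and q ∈ R with q ≠ ±1. Then for 0 ≤ r ≤ n, the coefficients of the characteristic polynomials of ED_T and L^q_T satisfy c_{1^n,r}^{ED_T}(q) = (1-q^2)^{r-1} · c_{1^n,n-r}^{L^q_T}(q), where det(xI - M) = Σ_{r=0}^n (-1)^r c_{1^n,r}^M x^{n-r} for M ∈ {ED_T, L^q_T}. -/

import Mathlib

open Polynomial

noncomputable def qLap {n : ℕ} (G : SimpleGraph (Fin n)) [DecidableRel G.Adj]
    {R : Type*} [CommRing R] (q : R) : Matrix (Fin n) (Fin n) R :=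
  Matrix.of fun i j =>
    if i = j then 1 + q ^ 2 * ((G.degree i : R) - 1)
    else if G.Adj i j then -q else 0

noncomputable def expDist {n : ℕ} (G : SimpleGraph (Fin n))
    {R : Type*} [CommRing R] (q : R) : Matrix (Fin n) (Fin n) R :=
  Matrix.of fun i j => if i = j then 1 else q ^ G.dist i j

set_option linter.unusedSectionVars false
set_option maxHeartbeats 1000000

open SimpleGraph

variable {V : Type*} {G : SimpleGraph V}

/-- In a tree, every path realizes the distance. -/
lemma tree_path_length (hG : G.IsTree) {u v : V} (p : G.Walk u v) (hp : p.IsPath) :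
    p.length = G.dist u v := by
  obtain ⟨q, hq, hql⟩ := hG.isConnected.exists_path_of_dist u v
  rw [← hql]
  congr 1
  exact ExistsUnique.unique (hG.existsUnique_path u v) hp hq

/-- Appending an edge to a path whose new endpoint avoids the path is a path. -/
lemma isPath_concat {u v w : V} {p : G.Walk u v} (hp : p.IsPath) (h : G.Adj v w)
    (hw : w ∉ p.support) : (p.concat h).IsPath := by
  rw [← SimpleGraph.Walk.isPath_reverse_iff, SimpleGraph.Walk.reverse_concat]
  exact SimpleGraph.Walk.IsPath.cons ((SimpleGraph.Walk.isPath_reverse_iff p).mpr hp) (by simpa using hw)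

open SimpleGraph Walk in
lemma helper_support_adj [DecidableEq V] (hG : G.IsTree) {i j k : V} (P : G.Walk i j) (hP : P.IsPath)
    (hk : k ∈ P.support) (hkj : G.Adj k j) :
    G.dist i k + 1 = P.length ∧ k = P.getVert (P.length - 1) := by
  have hkj' : k ≠ j := hkj.ne
  set t := P.takeUntil k hk with ht_def
  have ht : t.IsPath := hP.takeUntil hk
  have hjt : j ∉ t.support := by
    intro hjt
    have hspec := P.take_spec hk
    have hnd : P.support.Nodup := hP.support_nodup
    rw [← hspec, Walk.support_append] at hnd
    have hdisj := List.disjoint_of_nodup_append hnd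
    have hj2 : j ∈ (P.dropUntil k hk).support.tail := by
      have hj : j ∈ (P.dropUntil k hk).support := Walk.end_mem_support _
      rw [Walk.support_eq_cons] at hj
      rcases List.mem_cons.mp hj with h | h
      · exact absurd h.symm hkj'
      · exact h
    exact hdisj hjt hj2
  have hs : (t.concat hkj).IsPath := isPath_concat ht hkj hjt
  have hsP : t.concat hkj = P := (hG.existsUnique_path i j).unique hs hP
  have hlen : t.length + 1 = P.length := by rw [← hsP, Walk.length_concat]
  have hdist : G.dist i k = t.length := (tree_path_length hG t ht).symm
  constructor
  · omega
  · have : (t.concat hkj).getVert t.length = k := by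
      rw [Walk.concat_eq_append, Walk.getVert_append]
      simp
    rw [← hsP, Walk.length_concat]
    simpa using this.symm

/-- Master neighbor lemma for trees. -/
lemma tree_neighbors [DecidableEq V] (hG : G.IsTree) {i j : V} (hij : i ≠ j) :
    ∃ p, G.Adj p j ∧ G.dist i p + 1 = G.dist i j ∧
      ∀ k, G.Adj k j → k ≠ p → G.dist i k = G.dist i j + 1 := by
  obtain ⟨P, hP, hPl⟩ := hG.isConnected.exists_path_of_dist i j
  have hd : 1 ≤ G.dist i j := hG.isConnected.pos_dist_of_ne hij
  set d := G.dist i j with hd_def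
  refine ⟨P.getVert (d - 1), ?_, ?_, ?_⟩
  case _ =>
    have := P.adj_getVert_succ (i := d - 1) (by omega)
    have h2 : P.getVert (d - 1 + 1) = j := by
      have : d - 1 + 1 = P.length := by omega
      rw [this]; exact P.getVert_length
    rwa [h2] at this
  all_goals {
    have hadj : G.Adj (P.getVert (d - 1)) j := by
      have := P.adj_getVert_succ (i := d - 1) (by omega)
      have h2 : P.getVert (d - 1 + 1) = j := by
        have : d - 1 + 1 = P.length := by omega
        rw [this]; exact P.getVert_length
      rwa [h2] at this
    have hmem : P.getVert (d - 1) ∈ P.support :=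
      Walk.mem_support_iff_exists_getVert.mpr ⟨d - 1, rfl, by omega⟩
    first
    | exact (by
        have := (helper_support_adj hG P hP hmem hadj).1
        omega)
    | (intro k hkj hkp
       have hknot : k ∉ P.support := by
         intro hks
         exact hkp (by simpa [hPl] using (helper_support_adj hG P hP hks hkj).2)
       have hW : (P.concat hkj.symm).IsPath := isPath_concat hP hkj.symm hknot
       have := tree_path_length hG _ hW
       rw [Walk.length_concat] at this
       omega)
  }

section FinPart
variable {n : ℕ} {G : SimpleGraph (Fin n)} [DecidableRel G.Adj]

lemma sum_neighbors (hG : G.IsTree) (q : ℝ) {i j : Fin n} (hij : i ≠ j) :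
    ∑ k ∈ G.neighborFinset j, q ^ G.dist i k
      = q ^ (G.dist i j - 1) + ((G.degree j : ℝ) - 1) * q ^ (G.dist i j + 1) := by
  obtain ⟨p, hadj, hdist, hother⟩ := tree_neighbors hG hij
  have hp : p ∈ G.neighborFinset j := by
    simpa [SimpleGraph.mem_neighborFinset] using hadj.symm
  rw [← Finset.add_sum_erase _ _ hp]
  have hdeg : 1 ≤ G.degree j := by
    rw [← SimpleGraph.card_neighborFinset_eq_degree]
    exact Finset.card_pos.mpr ⟨p, hp⟩
  congr 1
  · congr 1; omega
  · rw [Finset.sum_congr rfl (fun k hk => ?_)]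
    · rw [Finset.sum_const, Finset.card_erase_of_mem hp,
        SimpleGraph.card_neighborFinset_eq_degree, nsmul_eq_mul, Nat.cast_sub hdeg,
        Nat.cast_one]
    · obtain ⟨hkp, hkN⟩ := Finset.mem_erase.mp hk
      rw [hother k ((SimpleGraph.mem_neighborFinset _ _ _).mp hkN).symm hkp]

lemma expDist_apply_eq (hG : G.IsTree) (q : ℝ) (i k : Fin n) :
    expDist G q i k = q ^ G.dist i k := by
  by_cases h : i = k
  · subst h; simp [expDist, SimpleGraph.dist_self]
  · simp [expDist, h]

lemma ED_mul_L (hG : G.IsTree) (q : ℝ) :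
    expDist G q * qLap G q = (1 - q ^ 2) • (1 : Matrix (Fin n) (Fin n) ℝ) := by
  classical
  ext i j
  rw [Matrix.mul_apply, ← Finset.add_sum_erase _ _ (Finset.mem_univ j)]
  have hNF : G.neighborFinset j = Finset.univ.filter (fun k => G.Adj k j) := by
    ext k; simp [SimpleGraph.mem_neighborFinset, SimpleGraph.adj_comm]
  have hsum : ∑ k ∈ Finset.univ.erase j, expDist G q i k * qLap G q k j
      = ∑ k ∈ G.neighborFinset j, q ^ G.dist i k * (-q) := by
    rw [Finset.sum_congr rfl (fun k hk => ?_) (g := fun k =>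
        if G.Adj k j then q ^ G.dist i k * (-q) else 0)]
    · rw [Finset.sum_erase _ (by simp), hNF, Finset.sum_filter]
    · have hkj : k ≠ j := Finset.ne_of_mem_erase hk
      rw [expDist_apply_eq hG]
      by_cases ha : G.Adj k j <;> simp [qLap, hkj, ha]
  rw [hsum, expDist_apply_eq hG]
  by_cases hij : i = j
  · subst hij
    have h1 : ∀ k ∈ G.neighborFinset i, q ^ G.dist i k * (-q) = q * (-q) := by
      intro k hk
      rw [SimpleGraph.mem_neighborFinset] at hk
      rw [(by simpa using hk : G.dist i k = 1)]
      ring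
    rw [Finset.sum_congr rfl h1, Finset.sum_const,
      SimpleGraph.card_neighborFinset_eq_degree, nsmul_eq_mul]
    simp [qLap, SimpleGraph.dist_self, Matrix.one_apply]
    ring
  · rw [← Finset.sum_mul, sum_neighbors hG q hij]
    have hd : 1 ≤ G.dist i j := hG.isConnected.pos_dist_of_ne hij
    obtain ⟨e, he⟩ : ∃ e, G.dist i j = e + 1 := ⟨G.dist i j - 1, by omega⟩
    rw [he]
    simp only [Nat.add_sub_cancel, qLap, Matrix.of_apply, if_pos rfl, if_true,
      Matrix.smul_apply, Matrix.one_apply, if_neg hij, smul_eq_mul, mul_zero]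
    ring

end FinPart

section Det
variable {n : ℕ} {G : SimpleGraph (Fin n)} [DecidableRel G.Adj]

lemma det_triangular_aux (f : Fin n → ℕ) (M : Matrix (Fin n) (Fin n) ℝ)
    (h : ∀ u v, u ≠ v → M u v ≠ 0 → f v < f u) : M.det = ∏ u, M u u := by
  classical
  set e := Tuple.sort f with he
  have hmono : Monotone (f ∘ e) := Tuple.monotone_sort f
  have hdet : ((M.submatrix e e).det = M.det) := Matrix.det_submatrix_equiv_self e M
  rw [← hdet, Matrix.det_of_lowerTriangular]
  · exact Equiv.prod_comp e (fun u => M u u)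
  · intro i j hij
    rw [OrderDual.toDual_lt_toDual] at hij
    by_contra hne
    have hij' : e i ≠ e j := fun hh => (lt_irrefl _ (e.injective hh ▸ hij)).elim
    have h2 := h (e i) (e j) hij' hne
    have := hmono (le_of_lt hij)
    simp only [Function.comp] at this
    omega

noncomputable def pa (hG : G.IsTree) (r u : Fin n) : Fin n :=
  if h : u = r then r
  else Classical.choose (tree_neighbors hG (show r ≠ u from fun hh => h hh.symm))

lemma pa_spec (hG : G.IsTree) (r : Fin n) {u : Fin n} (h : u ≠ r) :
    G.Adj (pa hG r u) u ∧ G.dist r (pa hG r u) + 1 = G.dist r u ∧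
      ∀ k, G.Adj k u → k ≠ pa hG r u → G.dist r k = G.dist r u + 1 := by
  rw [pa, dif_neg h]
  exact Classical.choose_spec (tree_neighbors hG (fun hh => h hh.symm))

end Det

section Det2
open Matrix
variable {n : ℕ} {G : SimpleGraph (Fin n)} [DecidableRel G.Adj]

noncomputable def Pmat (hG : G.IsTree) (r : Fin n) : Matrix (Fin n) (Fin n) ℝ :=
  Matrix.of fun w u => if w ≠ r ∧ u = pa hG r w then 1 else 0

lemma pa_iff (hG : G.IsTree) (r : Fin n) {u w : Fin n} (hw : w ≠ r) :
    pa hG r w = u ↔ (G.Adj u w ∧ G.dist r u + 1 = G.dist r w) := by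
  obtain ⟨h1, h2, h3⟩ := pa_spec hG r hw
  constructor
  · rintro rfl; exact ⟨h1, h2⟩
  · rintro ⟨ha, hd⟩
    by_contra hne
    have := h3 u ha (fun hh => hne hh.symm)
    omega

lemma pa_ne (hG : G.IsTree) (r : Fin n) {u : Fin n} (hu : u ≠ r) : pa hG r u ≠ u :=
  (pa_spec hG r hu).1.ne

lemma adj_dichotomy (hG : G.IsTree) (r : Fin n) {u v : Fin n} (h : G.Adj u v) :
    (u ≠ r ∧ pa hG r u = v) ∨ (v ≠ r ∧ pa hG r v = u) := by
  by_cases hv : v = r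
  · have hu : u ≠ r := fun hh => h.ne (hh.trans hv.symm)
    left
    refine ⟨hu, (pa_iff hG r hu).mpr ⟨h.symm, ?_⟩⟩
    rw [hv, SimpleGraph.dist_self]
    have : G.dist r u = 1 := by
      rw [SimpleGraph.dist_eq_one_iff_adj]
      exact (hv ▸ h).symm
    omega
  · by_cases hpv : pa hG r v = u
    · exact Or.inr ⟨hv, hpv⟩
    · have hdu : G.dist r u = G.dist r v + 1 := (pa_spec hG r hv).2.2 u h (fun hh => hpv hh.symm)
      have hu : u ≠ r := by
        rintro rfl
        rw [SimpleGraph.dist_self] at hdu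
        omega
      exact Or.inl ⟨hu, (pa_iff hG r hu).mpr ⟨h.symm, by omega⟩⟩

lemma adj_not_both (hG : G.IsTree) (r : Fin n) {u v : Fin n}
    (h1 : u ≠ r ∧ pa hG r u = v) (h2 : v ≠ r ∧ pa hG r v = u) : False := by
  have d1 := ((pa_iff hG r h1.1).mp h1.2).2
  have d2 := ((pa_iff hG r h2.1).mp h2.2).2
  omega

lemma adj_of_pa (hG : G.IsTree) (r : Fin n) {u v : Fin n} (hu : u ≠ r) (hpa : pa hG r u = v) :
    G.Adj u v := (((pa_iff hG r hu).mp hpa).1).symm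

lemma adj_decomp (hG : G.IsTree) (r : Fin n) :
    Pmat hG r + (Pmat hG r)ᵀ = Matrix.of (fun u v => if G.Adj u v then (1:ℝ) else 0) := by
  ext u v
  simp only [Matrix.add_apply, Matrix.transpose_apply, Pmat, Matrix.of_apply]
  by_cases h : G.Adj u v
  · rw [if_pos h]
    rcases adj_dichotomy hG r h with h1 | h2
    · rw [if_pos ⟨h1.1, h1.2.symm⟩, if_neg, add_zero]
      rintro ⟨hv, hpv⟩
      exact adj_not_both hG r h1 ⟨hv, hpv.symm⟩
    · rw [if_neg, if_pos ⟨h2.1, h2.2.symm⟩, zero_add]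
      rintro ⟨hu, hpu⟩
      exact adj_not_both hG r ⟨hu, hpu.symm⟩ h2
  · rw [if_neg h, if_neg, if_neg, add_zero]
    · rintro ⟨hv, hpv⟩
      exact h (adj_of_pa hG r hv hpv.symm).symm
    · rintro ⟨hu, hpu⟩
      exact h (adj_of_pa hG r hu hpu.symm)

lemma filter_pa_eq_r (hG : G.IsTree) (r : Fin n) :
    Finset.univ.filter (fun w => w ≠ r ∧ pa hG r w = r) = G.neighborFinset r := by
  ext w
  simp only [Finset.mem_filter, Finset.mem_univ, true_and, SimpleGraph.mem_neighborFinset]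
  constructor
  · rintro ⟨hw, hpa⟩
    exact ((pa_iff hG r hw).mp hpa).1
  · intro ha
    have hw : w ≠ r := ha.ne'
    refine ⟨hw, (pa_iff hG r hw).mpr ⟨ha, ?_⟩⟩
    rw [SimpleGraph.dist_self]
    have : G.dist r w = 1 := SimpleGraph.dist_eq_one_iff_adj.mpr ha
    omega

lemma filter_pa_eq (hG : G.IsTree) (r : Fin n) {u : Fin n} (hu : u ≠ r) :
    Finset.univ.filter (fun w => w ≠ r ∧ pa hG r w = u)
      = (G.neighborFinset u).erase (pa hG r u) := by
  ext w
  simp only [Finset.mem_filter, Finset.mem_univ, true_and, Finset.mem_erase,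
    SimpleGraph.mem_neighborFinset]
  constructor
  · rintro ⟨hw, hpa⟩
    obtain ⟨ha, hd⟩ := (pa_iff hG r hw).mp hpa
    refine ⟨?_, ha⟩
    rintro rfl
    have := ((pa_iff hG r hu).mp rfl).2
    omega
  · rintro ⟨hne, ha⟩
    have hd : G.dist r w = G.dist r u + 1 := (pa_spec hG r hu).2.2 w ha.symm hne
    have hw : w ≠ r := by
      rintro rfl
      rw [SimpleGraph.dist_self] at hd
      omega
    exact ⟨hw, (pa_iff hG r hw).mpr ⟨ha, by omega⟩⟩

end Det2

section Det3
open Matrix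
variable {n : ℕ} {G : SimpleGraph (Fin n)} [DecidableRel G.Adj]

lemma PtP (hG : G.IsTree) (r : Fin n) :
    (Pmat hG r)ᵀ * Pmat hG r
      = Matrix.diagonal (fun u => (G.degree u : ℝ) - 1) + Matrix.single r r 1 := by
  classical
  ext u v
  rw [Matrix.mul_apply]
  by_cases huv : u = v
  · subst huv
    have hterm : ∀ w : Fin n, (Pmat hG r)ᵀ u w * Pmat hG r w u
        = if w ≠ r ∧ pa hG r w = u then (1:ℝ) else 0 := by
      intro w
      simp only [Matrix.transpose_apply, Pmat, Matrix.of_apply]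
      by_cases hw1 : w = r
      · simp [hw1]
      · by_cases hw2 : u = pa hG r w
        · simp [hw1, hw2]
        · have hne : pa hG r w ≠ u := fun h => hw2 h.symm
          simp [hw1, hw2, hne]
    rw [Finset.sum_congr rfl (fun w _ => hterm w), Finset.sum_boole]
    by_cases hur : u = r
    · rw [hur, filter_pa_eq_r hG r]
      simp [Matrix.single, SimpleGraph.card_neighborFinset_eq_degree]
    · rw [filter_pa_eq hG r hur, Finset.card_erase_of_mem (by
        rw [SimpleGraph.mem_neighborFinset]
        exact (pa_spec hG r hur).1.symm), SimpleGraph.card_neighborFinset_eq_degree]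
      have hdeg : 1 ≤ G.degree u := by
        rw [← SimpleGraph.card_neighborFinset_eq_degree]
        refine Finset.card_pos.mpr ⟨pa hG r u, ?_⟩
        rw [SimpleGraph.mem_neighborFinset]
        exact (pa_spec hG r hur).1.symm
      rw [Nat.cast_sub hdeg]
      simp [Matrix.single, Matrix.diagonal, hur, Ne.symm hur]
  · rw [Finset.sum_eq_zero, Matrix.add_apply, Matrix.diagonal_apply_ne _ huv]
    · have hc : ¬ (r = u ∧ r = v) := fun h => huv (h.1.symm.trans h.2)
      simp [Matrix.single, hc]
    · intro w _
      simp only [Matrix.transpose_apply, Pmat, Matrix.of_apply]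
      by_cases h1 : w ≠ r ∧ u = pa hG r w
      · rw [if_pos h1, if_neg (fun h2 : w ≠ r ∧ v = pa hG r w
          => huv (h1.2.trans h2.2.symm)), mul_zero]
      · rw [if_neg h1, zero_mul]

lemma PtE (hG : G.IsTree) (r : Fin n) (c : ℝ) :
    (Pmat hG r)ᵀ * Matrix.single r r c = 0 := by
  ext u v
  rw [Matrix.mul_apply, Finset.sum_eq_zero, Matrix.zero_apply]
  intro w _
  by_cases hw : w = r
  · subst hw
    simp [Pmat]
  · simp [Matrix.single, hw, Ne.symm hw]

lemma qLap_decomp (q : ℝ) :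
    qLap G q = 1 - q • Matrix.of (fun u v => if G.Adj u v then (1:ℝ) else 0)
      + q ^ 2 • Matrix.diagonal (fun u => (G.degree u : ℝ) - 1) := by
  ext u v
  simp only [qLap, Matrix.of_apply, Matrix.add_apply, Matrix.sub_apply, Matrix.smul_apply,
    Matrix.one_apply, smul_eq_mul]
  by_cases huv : u = v
  · subst huv
    rw [if_pos rfl, if_pos rfl, if_neg (G.irrefl), Matrix.diagonal_apply_eq]
    ring
  · rw [if_neg huv, if_neg huv, Matrix.diagonal_apply_ne _ huv]
    by_cases ha : G.Adj u v <;> simp [ha]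

lemma qLap_factor (hG : G.IsTree) (r : Fin n) (q : ℝ) :
    qLap G q = (1 - q • Pmat hG r)ᵀ *
      ((1 - q • Pmat hG r) - Matrix.single r r (q ^ 2)) := by
  set P := Pmat hG r with hP
  have ht : (1 - q • P)ᵀ = 1 - q • Pᵀ := by
    rw [Matrix.transpose_sub, Matrix.transpose_one, Matrix.transpose_smul]
  rw [ht, Matrix.sub_mul, Matrix.one_mul, Matrix.smul_mul, Matrix.mul_sub, Matrix.mul_sub,
    PtE hG r, Matrix.mul_one, Matrix.mul_smul, PtP hG r, qLap_decomp q, ← adj_decomp hG r]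
  have hE : q • (q • (Matrix.diagonal (fun u => (G.degree u : ℝ) - 1)
      + Matrix.single r r 1))
      = q ^ 2 • Matrix.diagonal (fun u => (G.degree u : ℝ) - 1)
        + Matrix.single r r (q ^ 2) := by
    rw [smul_smul, smul_add, Matrix.smul_single, smul_eq_mul, mul_one, ← pow_two]
  rw [sub_zero, smul_sub, hE, smul_add]
  abel

section Det4
open Matrix
variable {n : ℕ} {G : SimpleGraph (Fin n)} [DecidableRel G.Adj]

lemma Pmat_offdiag (hG : G.IsTree) (r : Fin n) {u v : Fin n}
    (h : Pmat hG r u v ≠ 0) : G.dist r v < G.dist r u := by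
  have hc : u ≠ r ∧ v = pa hG r u := by
    by_contra hc
    exact h (by simp [Pmat, hc])
  obtain ⟨hur, hv⟩ := hc
  have := ((pa_iff hG r hur).mp hv.symm).2
  omega

lemma Pmat_diag (hG : G.IsTree) (r u : Fin n) : Pmat hG r u u = 0 := by
  by_cases hur : u = r
  · simp [Pmat, hur]
  · simp [Pmat, hur, (pa_ne hG r hur).symm]

lemma det_U (hG : G.IsTree) (r : Fin n) (q : ℝ) : (1 - q • Pmat hG r).det = 1 := by
  rw [det_triangular_aux (G.dist r)]
  · rw [Finset.prod_congr rfl (fun u _ => ?_), Finset.prod_const_one]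
    simp [Matrix.sub_apply, Matrix.one_apply, Pmat_diag hG r u]
  · intro u v huv hne
    apply Pmat_offdiag hG r (u := u) (v := v)
    intro h0
    apply hne
    simp [Matrix.sub_apply, Matrix.one_apply, huv, h0]

lemma det_V (hG : G.IsTree) (r : Fin n) (q : ℝ) :
    ((1 - q • Pmat hG r) - Matrix.single r r (q ^ 2)).det = 1 - q ^ 2 := by
  rw [det_triangular_aux (G.dist r)]
  · rw [Finset.prod_congr rfl (fun u _ => ?_)
      (g := fun u => if u = r then 1 - q ^ 2 else 1)]
    · simp
    · by_cases hur : u = r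
      · simp [Matrix.sub_apply, Matrix.one_apply, Pmat_diag hG r u, hur,
          Pmat_diag hG r r, Matrix.single]
      · simp [Matrix.sub_apply, Matrix.one_apply, Pmat_diag hG r u, hur,
          Matrix.single, Ne.symm hur]
  · intro u v huv hne
    apply Pmat_offdiag hG r (u := u) (v := v)
    intro h0
    apply hne
    have hc : ¬ (r = u ∧ r = v) := fun h => huv (h.1.symm.trans h.2)
    simp [Matrix.sub_apply, Matrix.one_apply, huv, h0, Matrix.single, hc]

lemma det_qLap (hG : G.IsTree) (q : ℝ) : (qLap G q).det = 1 - q ^ 2 := by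
  have hn : Nonempty (Fin n) := hG.isConnected.nonempty
  obtain ⟨r⟩ := hn
  rw [qLap_factor hG r q, Matrix.det_mul, Matrix.det_transpose, det_U hG r q,
    det_V hG r q, one_mul]

end Det4

section Final
open Matrix Polynomial

lemma eval_charpoly' {m : ℕ} (M : Matrix (Fin m) (Fin m) ℝ) (x : ℝ) :
    (Matrix.charpoly M).eval x = (x • (1 : Matrix (Fin m) (Fin m) ℝ) - M).det := by
  rw [Matrix.charpoly, ← Polynomial.coe_evalRingHom, RingHom.map_det]
  congr 1
  ext i j
  by_cases h : i = j <;>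
    simp [h, Matrix.charmatrix_apply_eq, Matrix.charmatrix_apply_ne, Matrix.sub_apply,
      Matrix.smul_apply, Matrix.one_apply]

theorem expDist_charpoly_coeff {n : ℕ} (G : SimpleGraph (Fin n)) [DecidableRel G.Adj]
    (hG : G.IsTree) (q : ℝ) (h1 : q ≠ 1) (h2 : q ≠ -1) (r : ℕ) (hr : r ≤ n) :
    (-1 : ℝ) ^ r * (Matrix.charpoly (expDist G q)).coeff (n - r)
      = (1 - q ^ 2) ^ ((r : ℤ) - 1) *
          ((-1 : ℝ) ^ (n - r) * (Matrix.charpoly (qLap G q)).coeff r) := by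
  classical
  set c : ℝ := 1 - q ^ 2 with hc_def
  have hc : c ≠ 0 := by
    intro h
    rcases mul_eq_zero.mp (show (1 - q) * (1 + q) = 0 by linear_combination h) with h' | h'
    · exact h1 (by linarith)
    · exact h2 (by linarith)
  set L := qLap G q with hL_def
  set E := expDist G q with hE_def
  have hEL : E * L = c • 1 := ED_mul_L hG q
  have hdetL : L.det = c := det_qLap hG q
  set pL := L.charpoly with hpL_def
  set pE := E.charpoly with hpE_def
  have hdeg : pL.natDegree = n := by
    rw [hpL_def, Matrix.charpoly_natDegree_eq_dim, Fintype.card_fin]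
  have key : ∀ x : ℝ, x ≠ 0 → c * pE.eval x
      = (-1) ^ n * ∑ s ∈ Finset.range (n + 1), pL.coeff s * c ^ s * x ^ (n - s) := by
    intro x hx
    have h1' : pE.eval x * c = ((x • 1 - E) * L).det := by
      rw [Matrix.det_mul, eval_charpoly', hdetL]
    have h2' : (x • 1 - E) * L = (-x) • ((c / x) • (1 : Matrix (Fin n) (Fin n) ℝ) - L) := by
      rw [Matrix.sub_mul, Matrix.smul_mul, Matrix.one_mul, hEL, smul_sub, smul_smul]
      rw [show -x * (c / x) = -c by field_simp]
      module
    have h3' : ((-x) • ((c / x) • (1 : Matrix (Fin n) (Fin n) ℝ) - L)).det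
        = (-x) ^ n * pL.eval (c / x) := by
      rw [Matrix.det_smul, eval_charpoly', Fintype.card_fin]
    have h4' : pL.eval (c / x) = ∑ s ∈ Finset.range (n + 1), pL.coeff s * (c / x) ^ s := by
      have := Polynomial.eval_eq_sum_range (R := ℝ) (p := pL) (c / x)
      rwa [hdeg] at this
    rw [mul_comm c (pE.eval x), h1', h2', h3', h4', neg_pow x n, mul_assoc]
    congr 1
    rw [Finset.mul_sum]
    refine Finset.sum_congr rfl fun s hs => ?_
    have hsn : s ≤ n := Nat.lt_succ_iff.mp (Finset.mem_range.mp hs)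
    rw [div_pow, pow_sub₀ x hx hsn]
    field_simp
  have poly_eq : Polynomial.C c * pE
      = Polynomial.C ((-1 : ℝ) ^ n) * ∑ s ∈ Finset.range (n + 1),
          Polynomial.C (pL.coeff s * c ^ s) * Polynomial.X ^ (n - s) := by
    apply Polynomial.eq_of_infinite_eval_eq
    refine Set.Infinite.mono ?_ ((Set.finite_singleton (0 : ℝ)).infinite_compl)
    intro x hx
    have hx0 : x ≠ 0 := Set.mem_compl_singleton_iff.mp hx
    simp only [Set.mem_setOf_eq, Polynomial.eval_mul, Polynomial.eval_C,
      Polynomial.eval_finset_sum, Polynomial.eval_pow, Polynomial.eval_X]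
    rw [key x hx0]
  have hcoeff : c * pE.coeff (n - r) = (-1) ^ n * (pL.coeff r * c ^ r) := by
    have := congrArg (fun p => Polynomial.coeff p (n - r)) poly_eq
    simp only [Polynomial.coeff_C_mul, Polynomial.finset_sum_coeff, Polynomial.coeff_C_mul,
      Polynomial.coeff_X_pow] at this
    rw [this]
    congr 1
    rw [Finset.sum_congr rfl (fun s hs => ?_), Finset.sum_ite_eq' (Finset.range (n + 1)) r
      (fun s => pL.coeff s * c ^ s), if_pos (Finset.mem_range.mpr (by omega))]
    have hsn : s ≤ n := Nat.lt_succ_iff.mp (Finset.mem_range.mp hs)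
    by_cases hsr : s = r
    · rw [if_pos (by omega), if_pos hsr, mul_one]
    · rw [if_neg (by omega), if_neg hsr, mul_zero]
  have hm : (-1 : ℝ) ^ n = (-1) ^ (n - r) * (-1) ^ r := by
    rw [← pow_add]; congr 1; omega
  have hrr : (-1 : ℝ) ^ r * (-1) ^ r = 1 := by
    rw [← mul_pow]; norm_num
  rw [zpow_sub_one₀ hc, zpow_natCast]
  apply mul_left_cancel₀ hc
  calc c * ((-1 : ℝ) ^ r * pE.coeff (n - r))
      = (-1 : ℝ) ^ r * (c * pE.coeff (n - r)) := by ring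
    _ = (-1 : ℝ) ^ r * ((-1) ^ n * (pL.coeff r * c ^ r)) := by rw [hcoeff]
    _ = ((-1 : ℝ) ^ r * (-1) ^ r) * ((-1) ^ (n - r) * (pL.coeff r * c ^ r)) := by
        rw [hm]; ring
    _ = (-1 : ℝ) ^ (n - r) * (pL.coeff r * c ^ r) := by rw [hrr, one_mul]
    _ = c * (c ^ r * c⁻¹ * ((-1) ^ (n - r) * pL.coeff r)) := by
        field_simp
end Final
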